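/- Let G be a nontrivial totally ordered abelian group and a > 0 in G. The conductive monoid M_a = {0} ∪ {g ∈ G : g ≥ a} is a length-factorial monoid if and only if G = Z·b for some b > 0 in G and a ∈ {b, 2b}. -/

import Mathlib

/-- `x` is invertible within the subset `S` of the ambient monoid. -/
def SUnit {A : Type*} [AddCommMonoid A] (S : Set A) (x : A) : Prop := ∃ y ∈ S, x + y = 0

/-- `a` is an atom of the subset (submonoid) `S`: it is non-invertible in `S` and
cannot be written as a sum of two non-invertible elements of `S`. -/
def SAtom {A : Type*} [AddCommMonoid A] (S : Set A) (a : A) : Prop :=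
  a ∈ S ∧ ¬ SUnit S a ∧ ∀ b ∈ S, ∀ c ∈ S, a = b + c → SUnit S b ∨ SUnit S c

/-- `x` is an atomic element of `S`: invertible in `S` or a finite sum of atoms of `S`. -/
def SAtomicElem {A : Type*} [AddCommMonoid A] (S : Set A) (x : A) : Prop :=
  SUnit S x ∨ ∃ l : Multiset A, (∀ a ∈ l, SAtom S a) ∧ l.sum = x

/-- The subset (submonoid) `S` is atomic. -/
def SAtomic {A : Type*} [AddCommMonoid A] (S : Set A) : Prop :=
  ∀ x ∈ S, SAtomicElem S x

section Aux
set_option linter.unusedSectionVars false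
variable {G : Type*} [AddCommGroup G] [LinearOrder G] [IsOrderedAddMonoid G]

lemma memS_iff {a x : G} : x ∈ ({0} ∪ Set.Ici a : Set G) ↔ x = 0 ∨ a ≤ x := by
  simp [Set.mem_union]

lemma sunit_iff {a x : G} (ha : 0 < a) (hx : x ∈ ({0} ∪ Set.Ici a : Set G)) :
    SUnit ({0} ∪ Set.Ici a : Set G) x ↔ x = 0 := by
  constructor
  · rintro ⟨y, hy, hxy⟩
    rcases memS_iff.1 hy with rfl | hy'
    · simpa using hxy
    · rcases memS_iff.1 hx with rfl | hx'
      · rfl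
      · exfalso
        have h1 : 0 < x + y := add_pos (ha.trans_le hx') (ha.trans_le hy')
        rw [hxy] at h1
        exact lt_irrefl _ h1
  · rintro rfl
    exact ⟨0, memS_iff.2 (Or.inl rfl), add_zero 0⟩

lemma satom_iff {a x : G} (ha : 0 < a) :
    SAtom ({0} ∪ Set.Ici a : Set G) x ↔ a ≤ x ∧ x < a + a := by
  constructor
  · rintro ⟨hxS, hxu, hmin⟩
    have hax : a ≤ x := by
      rcases memS_iff.1 hxS with rfl | h
      · exact absurd ((sunit_iff ha hxS).2 rfl) hxu
      · exact h
    refine ⟨hax, ?_⟩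
    by_contra h
    push_neg at h
    have h1 : a ∈ ({0} ∪ Set.Ici a : Set G) := memS_iff.2 (Or.inr le_rfl)
    have h2 : x - a ∈ ({0} ∪ Set.Ici a : Set G) := memS_iff.2 (Or.inr (le_sub_iff_add_le.2 h))
    rcases hmin a h1 (x - a) h2 (by abel) with hu | hu
    · exact absurd ((sunit_iff ha h1).1 hu) ha.ne'
    · have h3 := (sunit_iff ha h2).1 hu
      have h4 : x = a := by rwa [sub_eq_zero] at h3
      rw [h4] at h
      exact absurd h (by simpa using ha.not_ge)
  · rintro ⟨h1, h2⟩
    have hxS : x ∈ ({0} ∪ Set.Ici a : Set G) := memS_iff.2 (Or.inr h1)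
    refine ⟨hxS, ?_, ?_⟩
    · intro hu
      have h3 := (sunit_iff ha hxS).1 hu
      rw [h3] at h1
      exact absurd h1 ha.not_ge
    · rintro b hb c hc hbc
      rcases memS_iff.1 hb with rfl | hb'
      · exact Or.inl ((sunit_iff ha hb).2 rfl)
      rcases memS_iff.1 hc with rfl | hc'
      · exact Or.inr ((sunit_iff ha hc).2 rfl)
      · exfalso
        rw [hbc] at h2
        exact absurd (add_le_add hb' hc') (not_le.2 h2)

lemma sum_const' {l : Multiset G} {c : G} (h : ∀ x ∈ l, x = c) : l.sum = l.card • c := by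
  rw [Multiset.eq_replicate_card.2 h]; simp

lemma pair_decomp [DecidableEq G] {x y : G} (hxy : x ≠ y) (l : Multiset G)
    (h : ∀ z ∈ l, z = x ∨ z = y) :
    l = Multiset.replicate (l.count x) x + Multiset.replicate (l.count y) y := by
  ext z
  rw [Multiset.count_add, Multiset.count_replicate, Multiset.count_replicate]
  by_cases hzx : z = x
  · subst hzx
    simp [Ne.symm hxy]
  · by_cases hzy : z = y
    · subst hzy
      simp [Ne.symm hzx]
    · have : z ∉ l := fun hz => by rcases h z hz with rfl | rfl <;> simp_all
      simp [Ne.symm hzx, Ne.symm hzy, Multiset.count_eq_zero_of_notMem this]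

lemma pair_sum [DecidableEq G] {x y : G} (hxy : x ≠ y) (l : Multiset G)
    (h : ∀ z ∈ l, z = x ∨ z = y) :
    l.sum = (l.count x) • x + (l.count y) • y ∧ l.card = l.count x + l.count y := by
  constructor
  · conv_lhs => rw [pair_decomp hxy l h]
    simp
  · conv_lhs => rw [pair_decomp hxy l h]
    simp

lemma nsmul_inj {b : G} (hb : 0 < b) {m n : ℕ} (h : m • b = n • b) : m = n := by
  rcases lt_trichotomy m n with h' | h' | h'
  · exact absurd h (nsmul_lt_nsmul_left hb h').ne
  · exact h'
  · exact absurd h.symm (nsmul_lt_nsmul_left hb h').ne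

lemma comb_smul (b : G) (i j : ℕ) : i • (b+b) + j • (b+b+b) = (2*i+3*j) • b := by
  have h2 : b + b = (2:ℕ) • b := (two_smul ℕ b).symm
  have h3 : b + b + b = (3:ℕ) • b := by
    rw [show (3:ℕ) = 2+1 from rfl, add_smul, one_smul, ← h2]
  rw [h3, h2, smul_smul, smul_smul, ← add_smul, mul_comm i 2, mul_comm j 3]

lemma two_three (n : ℕ) (hn : 2 ≤ n) : ∃ q r : ℕ, n = 2*q + 3*r := by
  rcases Nat.even_or_odd n with ⟨k, hk⟩ | ⟨k, hk⟩
  · exact ⟨k, 0, by omega⟩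
  · exact ⟨k-1, 1, by omega⟩

lemma noThree_atoms {a : G} (ha : 0 < a)
    (hLF : ∀ x ∈ ({0} ∪ Set.Ici a : Set G), ∀ l₁ l₂ : Multiset G,
        (∀ b ∈ l₁, SAtom ({0} ∪ Set.Ici a : Set G) b) → l₁.sum = x →
        (∀ b ∈ l₂, SAtom ({0} ∪ Set.Ici a : Set G) b) → l₂.sum = x →
        l₁.card = l₂.card → l₁ = l₂)
    {u v w : G} (hu : SAtom ({0} ∪ Set.Ici a : Set G) u)
    (hv : SAtom ({0} ∪ Set.Ici a : Set G) v)
    (hw : SAtom ({0} ∪ Set.Ici a : Set G) w)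
    (huw : u < w) (hwv : w < v) : False := by
  obtain ⟨hu1, _⟩ := (satom_iff ha).1 hu
  obtain ⟨hv1, hv2⟩ := (satom_iff ha).1 hv
  have hw'1 : u < u + v - w := lt_sub_iff_add_lt.2 (add_lt_add_right hwv u)
  have hw'2 : u + v - w < v := sub_lt_iff_lt_add.2 (by
    calc u + v < w + v := add_lt_add_left huw v
    _ = v + w := add_comm _ _)
  have hw' : SAtom ({0} ∪ Set.Ici a : Set G) (u + v - w) :=
    (satom_iff ha).2 ⟨hu1.trans hw'1.le, hw'2.trans hv2⟩
  have hxS : u + v ∈ ({0} ∪ Set.Ici a : Set G) :=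
    memS_iff.2 (Or.inr (hu1.trans (le_add_of_nonneg_right (ha.le.trans hv1))))
  have heq := hLF (u + v) hxS (u ::ₘ {v}) (w ::ₘ {u + v - w}) ?_ ?_ ?_ ?_ ?_
  · have hmem : w ∈ (u ::ₘ ({v} : Multiset G)) := by rw [heq]; simp
    simp only [Multiset.mem_cons, Multiset.mem_singleton] at hmem
    rcases hmem with rfl | rfl
    · exact lt_irrefl _ huw
    · exact lt_irrefl _ hwv
  · intro z hz
    simp only [Multiset.mem_cons, Multiset.mem_singleton] at hz
    rcases hz with rfl | rfl
    · exact hu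
    · exact hv
  · simp
  · intro z hz
    simp only [Multiset.mem_cons, Multiset.mem_singleton] at hz
    rcases hz with rfl | rfl
    · exact hw
    · exact hw'
  · simp
  · simp

end Aux

lemma backward_one {G : Type*} [AddCommGroup G] [LinearOrder G] [IsOrderedAddMonoid G] {b : G} (hb : 0 < b)
    (hgen : ∀ g : G, ∃ n : ℤ, g = n • b) :
    (SAtomic ({0} ∪ Set.Ici b : Set G) ∧
      ∀ x ∈ ({0} ∪ Set.Ici b : Set G), ∀ l₁ l₂ : Multiset G,
        (∀ c ∈ l₁, SAtom ({0} ∪ Set.Ici b : Set G) c) → l₁.sum = x →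
        (∀ c ∈ l₂, SAtom ({0} ∪ Set.Ici b : Set G) c) → l₂.sum = x →
        l₁.card = l₂.card → l₁ = l₂) := by
  have hcl : ∀ z, SAtom ({0} ∪ Set.Ici b : Set G) z → z = b := by
    intro z hz
    obtain ⟨hz1, hz2⟩ := (satom_iff hb).1 hz
    obtain ⟨n, rfl⟩ := hgen z
    have e1 : (1:ℤ) ≤ n := (zsmul_le_zsmul_iff_left hb).1 (by rwa [one_zsmul])
    have e2 : n < 2 := (zsmul_lt_zsmul_iff_left hb).1 (by rwa [two_zsmul])
    have hn1 : n = 1 := by omega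
    rw [hn1, one_zsmul]
  constructor
  · intro x hx
    rcases memS_iff.1 hx with rfl | hxa
    · exact Or.inl ((sunit_iff hb hx).2 rfl)
    · right
      obtain ⟨n, rfl⟩ := hgen x
      have hn : (1:ℤ) ≤ n := (zsmul_le_zsmul_iff_left hb).1 (by rwa [one_zsmul])
      refine ⟨Multiset.replicate n.toNat b, ?_, ?_⟩
      · intro z hz
        rw [Multiset.eq_of_mem_replicate hz]
        exact (satom_iff hb).2 ⟨le_rfl, lt_add_of_pos_right b hb⟩
      · rw [Multiset.sum_replicate, ← natCast_zsmul, Int.toNat_of_nonneg (by omega)]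
  · intro x hx l₁ l₂ h1 hs1 h2 hs2 hcard
    rw [Multiset.eq_replicate_card.2 (fun z hz => hcl z (h1 z hz)),
        Multiset.eq_replicate_card.2 (fun z hz => hcl z (h2 z hz)), hcard]

lemma backward_two {G : Type*} [AddCommGroup G] [LinearOrder G] [IsOrderedAddMonoid G] {b : G} (hb : 0 < b)
    (hgen : ∀ g : G, ∃ n : ℤ, g = n • b) :
    (SAtomic ({0} ∪ Set.Ici (b + b) : Set G) ∧
      ∀ x ∈ ({0} ∪ Set.Ici (b + b) : Set G), ∀ l₁ l₂ : Multiset G,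
        (∀ c ∈ l₁, SAtom ({0} ∪ Set.Ici (b + b) : Set G) c) → l₁.sum = x →
        (∀ c ∈ l₂, SAtom ({0} ∪ Set.Ici (b + b) : Set G) c) → l₂.sum = x →
        l₁.card = l₂.card → l₁ = l₂) := by
  classical
  have h0b : 0 < b + b := add_pos hb hb
  have hz3 : (3:ℤ) • b = b + b + b := by
    rw [show (3:ℤ) = 2 + 1 by norm_num, add_zsmul, two_zsmul, one_zsmul]
  have hne : (b+b) ≠ (b+b+b) := fun h => hb.ne' (left_eq_add.1 h)
  have hcl : ∀ z, SAtom ({0} ∪ Set.Ici (b+b) : Set G) z → z = b+b ∨ z = b+b+b := by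
    intro z hz
    obtain ⟨hz1, hz2⟩ := (satom_iff h0b).1 hz
    obtain ⟨n, rfl⟩ := hgen z
    have e1 : (2:ℤ) ≤ n := (zsmul_le_zsmul_iff_left hb).1 (by rwa [two_zsmul])
    have e2 : n < 4 := (zsmul_lt_zsmul_iff_left hb).1 (by
      rw [show (4:ℤ) = 2 + 2 by norm_num, add_zsmul, two_zsmul]
      exact hz2)
    have hn23 : n = 2 ∨ n = 3 := by omega
    rcases hn23 with rfl | rfl
    · exact Or.inl (two_zsmul b)
    · exact Or.inr hz3
  constructor
  · intro x hx
    rcases memS_iff.1 hx with rfl | hxa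
    · exact Or.inl ((sunit_iff h0b hx).2 rfl)
    · right
      obtain ⟨n, rfl⟩ := hgen x
      have hn : (2:ℤ) ≤ n := (zsmul_le_zsmul_iff_left hb).1 (by rwa [two_zsmul])
      obtain ⟨q, r, hqr⟩ := two_three n.toNat (by omega)
      refine ⟨Multiset.replicate q (b+b) + Multiset.replicate r (b+b+b), ?_, ?_⟩
      · intro z hz
        rcases Multiset.mem_add.1 hz with hz | hz
        · rw [Multiset.eq_of_mem_replicate hz]
          exact (satom_iff h0b).2 ⟨le_rfl, lt_add_of_pos_right _ h0b⟩
        · rw [Multiset.eq_of_mem_replicate hz]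
          exact (satom_iff h0b).2 ⟨le_add_of_nonneg_right hb.le,
            add_lt_add_right (lt_add_of_pos_left b hb) (b+b)⟩
      · rw [Multiset.sum_add, Multiset.sum_replicate, Multiset.sum_replicate, comb_smul,
          ← hqr, ← natCast_zsmul, Int.toNat_of_nonneg (by omega)]
  · intro x hx l₁ l₂ h1 hs1 h2 hs2 hcard
    have e1 := fun z hz => hcl z (h1 z hz)
    have e2 := fun z hz => hcl z (h2 z hz)
    obtain ⟨hs1', hc1⟩ := pair_sum hne l₁ e1
    obtain ⟨hs2', hc2⟩ := pair_sum hne l₂ e2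
    rw [comb_smul] at hs1' hs2'
    have hsum : (2 * l₁.count (b+b) + 3 * l₁.count (b+b+b)) • b
              = (2 * l₂.count (b+b) + 3 * l₂.count (b+b+b)) • b := by
      rw [← hs1', ← hs2', hs1, hs2]
    have hco := nsmul_inj hb hsum
    rw [hc1, hc2] at hcard
    have hcnt1 : l₁.count (b+b) = l₂.count (b+b) := by omega
    have hcnt2 : l₁.count (b+b+b) = l₂.count (b+b+b) := by omega
    rw [pair_decomp hne l₁ e1, pair_decomp hne l₂ e2, hcnt1, hcnt2]


/-- The conductive positive monoid `M_a = {0} ∪ G_{≥ a}` of a nontrivial totally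
ordered abelian group `G` (with `a > 0`) is a length-factorial monoid if and only
if `G = ℤ·b` for some `b > 0` and `a ∈ {b, 2b}`. -/
theorem conductive_monoid_lf_iff {G : Type*} [AddCommGroup G] [LinearOrder G] [IsOrderedAddMonoid G]
    [Nontrivial G] (a : G) (ha : 0 < a) :
    (SAtomic ({0} ∪ Set.Ici a : Set G) ∧
      ∀ x ∈ ({0} ∪ Set.Ici a : Set G), ∀ l₁ l₂ : Multiset G,
        (∀ b ∈ l₁, SAtom ({0} ∪ Set.Ici a : Set G) b) → l₁.sum = x →
        (∀ b ∈ l₂, SAtom ({0} ∪ Set.Ici a : Set G) b) → l₂.sum = x →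
        l₁.card = l₂.card → l₁ = l₂) ↔
    ∃ b : G, 0 < b ∧ (∀ g : G, ∃ n : ℤ, g = n • b) ∧ (a = b ∨ a = b + b) := by
  classical
  constructor
  · rintro ⟨hAt, hLF⟩
    have hAa : SAtom ({0} ∪ Set.Ici a : Set G) a :=
      (satom_iff ha).2 ⟨le_rfl, lt_add_of_pos_right a ha⟩
    by_cases hC : ∃ c, SAtom ({0} ∪ Set.Ici a : Set G) c ∧ c ≠ a
    · -- two atoms: a and c, with c + c = a + a + a
      obtain ⟨c, hc, hcne⟩ := hC
      obtain ⟨hc1, hc2⟩ := (satom_iff ha).1 hc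
      have hac : a < c := lt_of_le_of_ne hc1 (Ne.symm hcne)
      have hda : a < a + a + a - c := lt_sub_iff_add_lt.2 (by
        calc a + c < a + (a + a) := add_lt_add_right hc2 a
        _ = a + a + a := by abel)
      have hd : SAtom ({0} ∪ Set.Ici a : Set G) (a + a + a - c) :=
        (satom_iff ha).2 ⟨hda.le, sub_lt_iff_lt_add.2 (by
          calc a + a + a < a + a + c := add_lt_add_right hac (a + a)
          _ = a + a + c := rfl)⟩
      have hdc : a + a + a - c = c := by
        by_contra hne
        rcases lt_or_gt_of_ne hne with h' | h'
        · exact noThree_atoms ha hLF hAa hc hd hda h'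
        · exact noThree_atoms ha hLF hAa hd hc hac h'
      have hcc : a + a + a = c + c := sub_eq_iff_eq_add.1 hdc
      set b := c - a with hbdef
      have hb : 0 < b := sub_pos.2 hac
      have hab : a = b + b := by
        have h2 : b + b + (a + a) = c + c := by rw [hbdef]; abel
        rw [← hcc] at h2
        have h3 : a + (a + a) = b + b + (a + a) := by rw [h2]; abel
        exact add_right_cancel h3
      have hcb : c = a + b := by rw [hbdef]; abel
      have hba : b < a := by rw [hab]; exact lt_add_of_pos_left b hb
      have key : ∀ g : G, 0 < g → g = b ∨ a ≤ g := by
        intro g hg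
        rcases lt_trichotomy g b with h' | h' | h'
        · exfalso
          have hgat : SAtom ({0} ∪ Set.Ici a : Set G) (a + g) :=
            (satom_iff ha).2 ⟨le_add_of_nonneg_right hg.le,
              add_lt_add_right (h'.trans hba) a⟩
          have hlt : a + g < c := by rw [hcb]; exact add_lt_add_right h' a
          exact noThree_atoms ha hLF hAa hc hgat (lt_add_of_pos_right a hg) hlt
        · exact Or.inl h'
        · rcases le_or_gt a g with h'' | h''
          · exact Or.inr h''
          · exfalso
            have hgat : SAtom ({0} ∪ Set.Ici a : Set G) (a + g) :=
              (satom_iff ha).2 ⟨le_add_of_nonneg_right hg.le, add_lt_add_right h'' a⟩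
            have hlt : c < a + g := by rw [hcb]; exact add_lt_add_right h' a
            exact noThree_atoms ha hLF hAa hgat hc hac hlt
      have atomEq : ∀ x, SAtom ({0} ∪ Set.Ici a : Set G) x → x = a ∨ x = c := by
        intro x hx
        by_contra hne
        push_neg at hne
        obtain ⟨hx1, _⟩ := (satom_iff ha).1 hx
        have hax : a < x := lt_of_le_of_ne hx1 (Ne.symm hne.1)
        rcases lt_trichotomy x c with h' | h' | h'
        · exact noThree_atoms ha hLF hAa hc hx hax h'
        · exact hne.2 h'
        · exact noThree_atoms ha hLF hAa hx hc hac h'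
      have sumb : ∀ l : Multiset G, (∀ x ∈ l, SAtom ({0} ∪ Set.Ici a : Set G) x) →
          ∃ n : ℕ, l.sum = n • b := by
        intro l hl
        induction l using Multiset.induction_on with
        | empty => exact ⟨0, by simp⟩
        | cons z l ih =>
          obtain ⟨n, hn⟩ := ih (fun x hx => hl x (Multiset.mem_cons_of_mem hx))
          rcases atomEq z (hl z (Multiset.mem_cons_self z l)) with rfl | rfl
          · refine ⟨n + 2, ?_⟩
            rw [Multiset.sum_cons, hn, add_nsmul, two_nsmul]
            nth_rewrite 1 [hab]
            abel
          · refine ⟨n + 3, ?_⟩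
            rw [Multiset.sum_cons, hn, add_nsmul,
              show (3:ℕ) • b = b + b + b by
                rw [show (3:ℕ) = 2+1 from rfl, add_nsmul, two_nsmul, one_nsmul]]
            rw [hcb]
            nth_rewrite 1 [hab]
            abel
      refine ⟨b, hb, ?_, Or.inr hab⟩
      have pos : ∀ g : G, 0 < g → ∃ n : ℤ, g = n • b := by
        intro g hg
        rcases key g hg with rfl | hge
        · exact ⟨1, by simp⟩
        · have hgS : g ∈ ({0} ∪ Set.Ici a : Set G) := memS_iff.2 (Or.inr hge)
          rcases hAt g hgS with hu | ⟨l, hl, hsum⟩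
          · exact absurd ((sunit_iff ha hgS).1 hu) (ne_of_gt (ha.trans_le hge))
          · obtain ⟨n, hn⟩ := sumb l hl
            exact ⟨n, by rw [← hsum, hn, natCast_zsmul]⟩
      intro g
      rcases lt_trichotomy g 0 with h0 | h0 | h0
      · obtain ⟨n, hn⟩ := pos (-g) (neg_pos.2 h0)
        exact ⟨-n, by rw [neg_zsmul, ← hn, neg_neg]⟩
      · exact ⟨0, by simp [h0]⟩
      · exact pos g h0
    · -- unique atom a
      push_neg at hC
      refine ⟨a, ha, ?_, Or.inl rfl⟩
      have pos : ∀ g : G, 0 < g → ∃ n : ℤ, g = n • a := by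
        intro g hg
        have hga : a ≤ g := by
          by_contra h
          push_neg at h
          have hat : SAtom ({0} ∪ Set.Ici a : Set G) (a + g) :=
            (satom_iff ha).2 ⟨le_add_of_nonneg_right hg.le, add_lt_add_right h a⟩
          have h1 := hC _ hat
          have h2 : g = 0 := by
            have h3 : a + g = a + 0 := by rw [h1, add_zero]
            exact add_left_cancel h3
          exact hg.ne' h2
        have hgS : g ∈ ({0} ∪ Set.Ici a : Set G) := memS_iff.2 (Or.inr hga)
        rcases hAt g hgS with hu | ⟨l, hl, hsum⟩
        · exact absurd ((sunit_iff ha hgS).1 hu) (ne_of_gt (ha.trans_le hga))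
        · have hall : ∀ x ∈ l, x = a := fun x hx => hC x (hl x hx)
          refine ⟨l.card, ?_⟩
          rw [← hsum, sum_const' hall, natCast_zsmul]
      intro g
      rcases lt_trichotomy g 0 with h0 | h0 | h0
      · obtain ⟨n, hn⟩ := pos (-g) (neg_pos.2 h0)
        exact ⟨-n, by rw [neg_zsmul, ← hn, neg_neg]⟩
      · exact ⟨0, by simp [h0]⟩
      · exact pos g h0
  · rintro ⟨b, hb, hgen, hab⟩
    rcases hab with rfl | rfl
    · exact backward_one hb hgen
    · exact backward_two hb hgen
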